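/- Let 0 < a < m < n and b = m - a. Then (2^{n-m} - 1)(2^m - 2^a - 2^b + 1) < 2^n - 2^{n-a} - 2^{n-b} + 2^{n-m}, and moreover this right-hand side is strictly less than 2^n - 2^{n-a} - 2^a + 1. -/
import Mathlib


open Finset

def CrossSperner {α : Type*} [DecidableEq α] (F G : Finset (Finset α)) : Prop :=
  ∀ A ∈ F, ∀ B ∈ G, ¬ A ⊆ B ∧ ¬ B ⊆ A

def interFam {α : Type*} [DecidableEq α] (F G : Finset (Finset α)) : Finset (Finset α) :=
  (F ×ˢ G).image fun p => p.1 ∩ p.2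

noncomputable def mSperner (n : ℕ) : ℕ :=
  sSup {k | ∃ F G : Finset (Finset (Fin n)), CrossSperner F G ∧ k = (interFam F G).card}

theorem stmt12 (a b m n : ℕ) (ha : 0 < a) (ham : a < m) (hmn : m < n)
    (hb : b = m - a) :
    ((2 : ℤ) ^ (n - m) - 1) * (2 ^ m - 2 ^ a - 2 ^ b + 1) <
      2 ^ n - 2 ^ (n - a) - 2 ^ (n - b) + 2 ^ (n - m) ∧
    (2 : ℤ) ^ n - 2 ^ (n - a) - 2 ^ (n - b) + 2 ^ (n - m) <
      2 ^ n - 2 ^ (n - a) - 2 ^ a + 1 := by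
  have hbb : 1 ≤ b := by omega
  have e1 : n - a = (n - m) + b := by omega
  have e2 : n - b = (n - m) + a := by omega
  have e3 : n = (n - m) + a + b := by omega
  have e4 : m = a + b := by omega
  set c := n - m with hc
  rw [e1, e2, e3, e4]
  have ha2 : (2:ℤ) ≤ 2 ^ a := by
    calc (2:ℤ) = 2 ^ 1 := (pow_one 2).symm
    _ ≤ 2 ^ a := pow_le_pow_right₀ (by norm_num) ha
  have hb2 : (2:ℤ) ≤ 2 ^ b := by
    calc (2:ℤ) = 2 ^ 1 := (pow_one 2).symm
    _ ≤ 2 ^ b := pow_le_pow_right₀ (by norm_num) hbb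
  have hc2 : (2:ℤ) ≤ 2 ^ c := by
    calc (2:ℤ) = 2 ^ 1 := (pow_one 2).symm
    _ ≤ 2 ^ c := pow_le_pow_right₀ (by norm_num) (by omega)
  constructor <;> [skip; skip] <;>
  · simp only [pow_add]
    nlinarith [mul_pos (by positivity : (0:ℤ) < 2 ^ a) (by positivity : (0:ℤ) < 2 ^ b),
      mul_le_mul ha2 hb2 (by norm_num) (by positivity : (0:ℤ) ≤ 2 ^ a),
      mul_le_mul hc2 ha2 (by norm_num) (by positivity : (0:ℤ) ≤ 2 ^ c),
      mul_le_mul hc2 hb2 (by norm_num) (by positivity : (0:ℤ) ≤ 2 ^ c),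
      (by positivity : (0:ℤ) < 2 ^ c)]
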